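/- arXiv:2510.23490 — 5 statements merged into one kernel-verified Lean document; each statement's English description precedes it below -/
import Mathlib

section
/- Let D be a perfect structure. If s is a vertex of D with a →^w s, and w ≃_Π v for words w, v ∈ 𝔄*, then a →^v s. -/
/-- The smallest equivalence relation on words over `α` generated by
`w ++ lᵢ ++ v ≃ w ++ rᵢ ++ v` for pairs `(lᵢ, rᵢ) ∈ P`. -/
def ThueEq {α : Type} (P : List (List α × List α)) : List α → List α → Prop :=
  Relation.EqvGen (fun u v => ∃ x y p, p ∈ P ∧ u = x ++ p.1 ++ y ∧ v = x ++ p.2 ++ y)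

/-- `LPath E w s t`: there is a path from `s` to `t` whose edges are labeled by the word `w`. -/
def LPath {α V : Type} (E : α → V → V → Prop) : List α → V → V → Prop
  | [] => fun s t => s = t
  | R :: w => fun s t => ∃ u, E R s u ∧ LPath E w u t

lemma lpath_append {α V : Type} (E : α → V → V → Prop) (x y : List α) (s t : V) :
    LPath E (x ++ y) s t ↔ ∃ m, LPath E x s m ∧ LPath E y m t := by
  induction x generalizing s with
  | nil =>
    constructor
    · intro h; exact ⟨s, rfl, h⟩
    · rintro ⟨m, rfl, h⟩; exact h
  | cons R x ih =>
    constructor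
    · rintro ⟨u, hu, h⟩
      obtain ⟨m, h1, h2⟩ := (ih u).mp h
      exact ⟨m, ⟨u, hu, h1⟩, h2⟩
    · rintro ⟨m, ⟨u, hu, h1⟩, h2⟩
      exact ⟨u, hu, (ih u).mpr ⟨m, h1, h2⟩⟩

theorem perfect_path_congr {α V : Type} [Fintype α] (P : List (List α × List α))
    (E : α → V → V → Prop) (Ap : V → Prop) (a : V)
    (p1 : Ap a)
    (p2 : ∀ s, Ap s → ∀ S, ∃ t, E S s t)
    (p3 : ∀ s t R S, E R s t → ∃ u, E S t u)
    (hperf : ∀ w s t, LPath E w a s → ∀ p ∈ P, (LPath E p.1 s t ↔ LPath E p.2 s t))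
    (s : V) (w v : List α) (hw : LPath E w a s) (hwv : ThueEq P w v) :
    LPath E v a s := by
  have key : ∀ u u', ThueEq P u u' → (LPath E u a s ↔ LPath E u' a s) := by
    intro u u' h
    induction h with
    | rel u u' h =>
      obtain ⟨x, y, p, hp, rfl, rfl⟩ := h
      simp only [lpath_append]
      constructor
      · rintro ⟨n, ⟨m, hm, hl⟩, hrest⟩
        exact ⟨n, ⟨m, hm, (hperf x m n hm p hp).mp hl⟩, hrest⟩
      · rintro ⟨n, ⟨m, hm, hl⟩, hrest⟩
        exact ⟨n, ⟨m, hm, (hperf x m n hm p hp).mpr hl⟩, hrest⟩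
    | refl => exact Iff.rfl
    | symm _ _ _ ih => exact ih.symm
    | trans _ _ _ _ _ ih1 ih2 => exact ih1.trans ih2
  exact (key w v hwv).mp hw
end

section
/- The canonical structure 𝔻 is a perfect structure: for every word w ∈ 𝔄*, all vertices s, t of 𝔻 with a →^w s, and every pair [l_i, r_i] ∈ Π, the path relation s →^{l_i} t holds if and only if s →^{r_i} t holds. -/
def thueSetoid {α : Type} (P : List (List α × List α)) : Setoid (List α) :=
  ⟨ThueEq P, Relation.EqvGen.is_equivalence _⟩

/-- Vertices of the canonical structure 𝔻 : equivalence classes of words. -/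
def DVert {α : Type} (P : List (List α × List α)) : Type := Quotient (thueSetoid P)

/-- Edges of 𝔻 : `R([w],[v])` iff `wR ≃_Π v`. -/
def DEdge {α : Type} (P : List (List α × List α)) (R : α) (s t : DVert P) : Prop :=
  ∃ w v, s = Quotient.mk (thueSetoid P) w ∧ t = Quotient.mk (thueSetoid P) v ∧
    ThueEq P (w ++ [R]) v

/-- The unary predicate of 𝔻 : `A([w])` iff `w ≃_Π ε`. -/
def DA {α : Type} (P : List (List α × List α)) (s : DVert P) : Prop :=
  ∃ w, s = Quotient.mk (thueSetoid P) w ∧ ThueEq P w []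

theorem ThueEq.appendRight {α : Type} {P : List (List α × List α)} {a b : List α}
    (h : ThueEq P a b) (u : List α) : ThueEq P (a ++ u) (b ++ u) := by
  induction h with
  | rel x y hxy =>
    obtain ⟨x', y', p, hp, hx, hy⟩ := hxy
    exact Relation.EqvGen.rel _ _ ⟨x', y' ++ u, p, hp, by simp [hx], by simp [hy]⟩
  | refl x => exact Relation.EqvGen.refl _
  | symm x y _ ih => exact Relation.EqvGen.symm _ _ ih
  | trans x y z _ _ ih1 ih2 => exact Relation.EqvGen.trans _ _ _ ih1 ih2

theorem edge_iff {α : Type} {P : List (List α × List α)} {R : α} {x : List α} {t : DVert P} :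
    DEdge P R (Quotient.mk (thueSetoid P) x) t ↔ t = Quotient.mk (thueSetoid P) (x ++ [R]) := by
  constructor
  · rintro ⟨w, v, hsw, htv, hwv⟩
    have hxw : ThueEq P x w := Quotient.exact hsw
    subst htv
    apply Quotient.sound
    exact (Relation.EqvGen.is_equivalence _).symm
      ((Relation.EqvGen.is_equivalence _).trans (hxw.appendRight [R]) hwv)
  · rintro rfl
    exact ⟨x, x ++ [R], rfl, rfl, Relation.EqvGen.refl _⟩

theorem path_iff {α : Type} {P : List (List α × List α)} {u : List α} {x : List α} {t : DVert P} :
    LPath (DEdge P) u (Quotient.mk (thueSetoid P) x) t ↔ t = Quotient.mk (thueSetoid P) (x ++ u) := by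
  induction u generalizing x with
  | nil => simp [LPath, eq_comm]; exact eq_comm
  | cons R u ih =>
    constructor
    · rintro ⟨m, he, hp⟩
      rw [edge_iff] at he
      subst he
      rw [ih] at hp
      simpa using hp
    · rintro rfl
      exact ⟨_, edge_iff.mpr rfl, ih.mpr (by simp; rfl)⟩

theorem canonical_is_perfect {α : Type} [Fintype α] (P : List (List α × List α))
    (w : List α) (s t : DVert P)
    (hs : LPath (DEdge P) w (Quotient.mk (thueSetoid P) []) s) :
    ∀ p ∈ P, (LPath (DEdge P) p.1 s t ↔ LPath (DEdge P) p.2 s t) := by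
  intro p hp
  rw [path_iff] at hs
  subst hs
  simp only [List.nil_append]
  rw [path_iff, path_iff]
  have : ThueEq P (w ++ p.1) (w ++ p.2) :=
    Relation.EqvGen.rel _ _ ⟨w, [], p, hp, by simp, by simp⟩
  rw [Quotient.sound this]
end

section
/- If the instance 𝕋 = [l, r, Π] is negative (i.e., l ≄_Π r), then the canonical structure 𝔻 does not satisfy the diamond query: there is no vertex s of 𝔻 with A(s) and no vertex t such that both s →^l t and s →^r t. -/
lemma ThueEq.congr {α : Type} {P : List (List α × List α)} {u v : List α}
    (h : ThueEq P u v) (x y : List α) : ThueEq P (x ++ u ++ y) (x ++ v ++ y) := by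
  induction h with
  | rel a b hab =>
    obtain ⟨c, d, p, hp, ha, hb⟩ := hab
    exact Relation.EqvGen.rel _ _ ⟨x ++ c, d ++ y, p, hp, by simp [ha], by simp [hb]⟩
  | refl a => exact Relation.EqvGen.refl _
  | symm a b _ ih => exact Relation.EqvGen.symm _ _ ih
  | trans a b c _ _ ih1 ih2 => exact Relation.EqvGen.trans _ _ _ ih1 ih2

lemma lpath_class {α : Type} {P : List (List α × List α)} :
    ∀ (u : List α) (s t : DVert P), LPath (DEdge P) u s t →
      ∀ w, s = Quotient.mk (thueSetoid P) w → t = Quotient.mk (thueSetoid P) (w ++ u)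
  | [], s, t, h, w, hw => by subst h; simpa using hw
  | R :: u, s, t, h, w, hw => by
    obtain ⟨m, ⟨w', v, hs, hm, he⟩, hpath⟩ := h
    have h1 : ThueEq P w w' := Quotient.exact (hw ▸ hs)
    have h2 : ThueEq P (w ++ [R]) v :=
      Relation.EqvGen.trans _ _ _ (by simpa only [List.nil_append] using ThueEq.congr h1 [] [R] : ThueEq P (w ++ [R]) (w' ++ [R])) he
    have := lpath_class u m t hpath v hm
    rw [this]
    apply Quotient.sound
    have h3 : ThueEq P ((w ++ [R]) ++ u) (v ++ u) := by
      simpa only [List.nil_append] using ThueEq.congr h2 [] u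
    exact Relation.EqvGen.symm _ _ (by rw [show w ++ R :: u = (w ++ [R]) ++ u by simp]; exact h3)

theorem canonical_no_diamond_of_negative {α : Type} [Fintype α]
    (P : List (List α × List α)) (l r : List α)
    (hl : l ≠ []) (hr : r ≠ []) (hP : ∀ p ∈ P, p.1 ≠ [] ∧ p.2 ≠ [])
    (hneg : ¬ ThueEq P l r) :
    ¬ ∃ s : DVert P, DA P s ∧ ∃ t, LPath (DEdge P) l s t ∧ LPath (DEdge P) r s t := by
  rintro ⟨s, ⟨w, hsw, hwe⟩, t, hpl, hpr⟩
  have h1 := lpath_class l s t hpl w hsw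
  have h2 := lpath_class r s t hpr w hsw
  have h3 : ThueEq P (w ++ l) (w ++ r) := Quotient.exact (h1 ▸ h2)
  have h4 : ThueEq P l (w ++ l) := by
    have h : ThueEq P ([] ++ [] ++ l) ([] ++ w ++ l) := Relation.EqvGen.symm _ _ (ThueEq.congr hwe [] l)
    simpa only [List.nil_append] using h
  have h5 : ThueEq P (w ++ r) r := by simpa only [List.nil_append] using ThueEq.congr hwe [] r
  exact hneg (Relation.EqvGen.trans _ _ _ h4 (Relation.EqvGen.trans _ _ _ h3 h5))
end

section
/- If a candidate structure D is imperfect, then there exist a word w ∈ 𝔄*, a vertex s with a →^w s, and an index 1 ≤ i ≤ k, together with vertices y ≠ y' such that s →^{l_i} y and s →^{r_i} y'. -/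
theorem imperfect_detected {α V : Type} [Fintype α]
    (P : List (List α × List α))
    (E : α → V → V → Prop) (Ap : V → Prop) (a : V)
    (p1 : Ap a)
    (p2 : ∀ s, Ap s → ∀ S, ∃ t, E S s t)
    (p3 : ∀ s t R S, E R s t → ∃ u, E S t u)
    (himp : ¬ ∀ w s t, LPath E w a s → ∀ p ∈ P, (LPath E p.1 s t ↔ LPath E p.2 s t)) :
    ∃ (w : List α) (s : V), LPath E w a s ∧
      ∃ p ∈ P, ∃ y y', y ≠ y' ∧ LPath E p.1 s y ∧ LPath E p.2 s y' := by
  -- totality of paths from any "live" vertex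
  have total : ∀ (u : List α) (s : V), (Ap s ∨ ∃ r R, E R r s) → ∃ t, LPath E u s t := by
    intro u
    induction u with
    | nil => intro s _; exact ⟨s, rfl⟩
    | cons R w ih =>
      intro s hs
      obtain ⟨t, ht⟩ : ∃ t, E R s t := by
        rcases hs with h | ⟨r, S, h⟩
        · exact p2 s h R
        · exact p3 r s S R h
      obtain ⟨z, hz⟩ := ih t (Or.inr ⟨s, R, ht⟩)
      exact ⟨z, t, ht, hz⟩
  have live : ∀ (w : List α) (x s : V), (Ap x ∨ ∃ r R, E R r x) → LPath E w x s →
      (Ap s ∨ ∃ r R, E R r s) := by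
    intro w
    induction w with
    | nil => intro x s hx h; cases h; exact hx
    | cons R w ih =>
      intro x s hx h
      obtain ⟨u, hu, hw⟩ := h
      exact ih u s (Or.inr ⟨x, R, hu⟩) hw
  push_neg at himp
  obtain ⟨w, s, t, hws, p, hp, hiff⟩ := himp
  have hlive : Ap s ∨ ∃ r R, E R r s := live w a s (Or.inl p1) hws
  rcases hiff with ⟨h1, h2⟩ | ⟨h1, h2⟩
  · obtain ⟨y', hy'⟩ := total p.2 s hlive
    exact ⟨w, s, hws, p, hp, t, y', fun he => h2 (he ▸ hy'), h1, hy'⟩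
  · obtain ⟨y, hy⟩ := total p.1 s hlive
    exact ⟨w, s, hws, p, hp, y, t, fun he => h1 (he ▸ hy), hy, h2⟩
end

section
/- If every candidate structure D satisfies the disjunction Ψ = Γ^≠ ∨ γ_♢^∃ — where Γ^≠ asserts the existence of a vertex x and distinct vertices y ≠ y' with x →^{l_i} y and x →^{r_i} y' for some i, and γ_♢^∃ asserts the existence of vertices x, y with A(x), x →^l y, x →^r y — then l ≃_Π r. Conversely, if l ≃_Π r then every candidate structure satisfies Ψ. -/
namespace ThueAux

variable {α : Type}

lemma thue_congr_right (P : List (List α × List α)) {u v : List α}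
    (h : ThueEq P u v) (w : List α) : ThueEq P (u ++ w) (v ++ w) := by
  induction h with
  | rel x y hxy =>
    obtain ⟨a, b, p, hp, hx, hy⟩ := hxy
    exact Relation.EqvGen.rel _ _ ⟨a, b ++ w, p, hp, by simp [hx, hy]⟩
  | refl x => exact Relation.EqvGen.refl _
  | symm x y _ ih => exact Relation.EqvGen.symm _ _ ih
  | trans x y z _ _ ih1 ih2 => exact Relation.EqvGen.trans _ _ _ ih1 ih2

def thueSetoid (P : List (List α × List α)) : Setoid (List α) :=
  ⟨ThueEq P, Relation.EqvGen.is_equivalence _⟩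

variable {V : Type} (E : α → V → V → Prop)

lemma lpath_append {u v : List α} {s t : V} :
    LPath E (u ++ v) s t ↔ ∃ m, LPath E u s m ∧ LPath E v m t := by
  induction u generalizing s with
  | nil =>
    constructor
    · intro h; exact ⟨s, rfl, h⟩
    · rintro ⟨m, rfl, h⟩; exact h
  | cons R w ih =>
    constructor
    · rintro ⟨m, hm, h⟩
      obtain ⟨n, h1, h2⟩ := ih.1 h
      exact ⟨n, ⟨m, hm, h1⟩, h2⟩
    · rintro ⟨n, ⟨m, hm, h1⟩, h2⟩
      exact ⟨m, hm, ih.2 ⟨n, h1, h2⟩⟩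

lemma lpath_exists (Ap : V → Prop)
    (h2 : ∀ s, Ap s → ∀ S, ∃ t, E S s t)
    (h3 : ∀ s t R S, E R s t → ∃ u, E S t u) :
    ∀ (w : List α) (s : V), (Ap s ∨ ∃ R u, E R u s) →
      ∃ t, LPath E w s t ∧ (Ap t ∨ ∃ R u, E R u t) := by
  intro w
  induction w with
  | nil => intro s hs; exact ⟨s, rfl, hs⟩
  | cons R w ih =>
    intro s hs
    obtain ⟨u, hu⟩ : ∃ u, E R s u := by
      rcases hs with h | ⟨R', u', h'⟩
      · exact h2 s h R
      · exact h3 u' s R' R h'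
    obtain ⟨t, hp, ht⟩ := ih u (Or.inr ⟨R, s, hu⟩)
    exact ⟨t, ⟨u, hu, hp⟩, ht⟩

lemma good_of_lpath (Ap : V → Prop) {w : List α} {s t : V} (h : LPath E w s t)
    (hs : Ap s ∨ ∃ R u, E R u s) : Ap t ∨ ∃ R u, E R u t := by
  induction w generalizing s with
  | nil => rw [show s = t from h] at hs; exact hs
  | cons R w ih =>
    obtain ⟨u, hu, hp⟩ := h
    exact ih hp (Or.inr ⟨R, s, hu⟩)

/-- In the canonical quotient structure, any path from `⟦u⟧` labeled `w` ends at `⟦u ++ w⟧`. -/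
lemma canon_lpath_eq (P : List (List α × List α)) :
    ∀ (w u : List α) (t : Quotient (thueSetoid P)),
      LPath (fun (S : α) s t => ∃ x : List α,
        s = Quotient.mk (thueSetoid P) x ∧ t = Quotient.mk (thueSetoid P) (x ++ [S])) w
        (Quotient.mk (thueSetoid P) u) t →
      t = Quotient.mk (thueSetoid P) (u ++ w) := by
  intro w
  induction w with
  | nil => intro u t h; rw [← show Quotient.mk _ u = t from h]; simp
  | cons R w ih =>
    intro u t h
    obtain ⟨m, ⟨x, hx1, hx2⟩, hp⟩ := h
    subst hx2
    have := ih (x ++ [R]) t hp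
    rw [this]
    apply Quotient.sound
    have hxu : ThueEq P x u := Relation.EqvGen.symm _ _ (Quotient.exact hx1)
    have := thue_congr_right P hxu ([R] ++ w)
    show ThueEq P _ _
    simpa using this

lemma canon_lpath_exists (P : List (List α × List α)) :
    ∀ (w u : List α),
      LPath (fun (S : α) s t => ∃ x : List α,
        s = Quotient.mk (thueSetoid P) x ∧ t = Quotient.mk (thueSetoid P) (x ++ [S])) w
        (Quotient.mk (thueSetoid P) u) (Quotient.mk (thueSetoid P) (u ++ w)) := by
  intro w
  induction w with
  | nil => intro u; simp only [List.append_nil]; rfl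
  | cons R w ih =>
    intro u
    refine ⟨Quotient.mk (thueSetoid P) (u ++ [R]), ⟨u, rfl, rfl⟩, ?_⟩
    have := ih (u ++ [R])
    simpa using this

end ThueAux

theorem entailment_iff_positive {α : Type} [Fintype α]
    (P : List (List α × List α)) (l r : List α)
    (hl : l ≠ []) (hr : r ≠ []) (hP : ∀ p ∈ P, p.1 ≠ [] ∧ p.2 ≠ []) :
    (∀ (V : Type) (E : α → V → V → Prop) (Ap : V → Prop) (a : V),
        Ap a →
        (∀ s, Ap s → ∀ S, ∃ t, E S s t) →
        (∀ s t R S, E R s t → ∃ u, E S t u) →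
        ((∃ x, ∃ p ∈ P, ∃ y y', y ≠ y' ∧ LPath E p.1 x y ∧ LPath E p.2 x y') ∨
         (∃ x y, Ap x ∧ LPath E l x y ∧ LPath E r x y)))
    ↔ ThueEq P l r := by
  constructor
  · -- canonical structure
    intro H
    set Q := Quotient (ThueAux.thueSetoid P)
    set E : α → Q → Q → Prop := fun S s t => ∃ x : List α,
      s = Quotient.mk (ThueAux.thueSetoid P) x ∧ t = Quotient.mk (ThueAux.thueSetoid P) (x ++ [S])
    have hH := H Q E (fun s => s = Quotient.mk (ThueAux.thueSetoid P) [])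
      (Quotient.mk (ThueAux.thueSetoid P) []) rfl
      (by rintro s rfl S; exact ⟨_, [], rfl, rfl⟩)
      (by
        rintro s t R S ⟨x, hx1, rfl⟩
        exact ⟨_, x ++ [R], rfl, rfl⟩)
    rcases hH with ⟨x, p, hp, y, y', hne, h1, h2⟩ | ⟨x, y, hx, h1, h2⟩
    · exfalso
      obtain ⟨u, rfl⟩ := Quotient.exists_rep x
      have e1 := ThueAux.canon_lpath_eq P p.1 u y h1
      have e2 := ThueAux.canon_lpath_eq P p.2 u y' h2
      apply hne
      rw [e1, e2]
      exact Quotient.sound (Relation.EqvGen.rel _ _ ⟨u, [], p, hp, by simp, by simp⟩)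
    · subst hx
      have e1 := ThueAux.canon_lpath_eq P l [] y h1
      have e2 := ThueAux.canon_lpath_eq P r [] y h2
      rw [e1] at e2
      have := Quotient.exact e2
      simp at this
      exact this
  · -- ThueEq implies the disjunction in every candidate structure
    intro hT V E Ap a ha h2 h3
    by_cases hdet : ∃ x, ∃ p ∈ P, ∃ y y', y ≠ y' ∧ LPath E p.1 x y ∧ LPath E p.2 x y'
    · exact Or.inl hdet
    · right
      push_neg at hdet
      -- key: equivalent words have the same path endpoints from any "good" vertex
      have key : ∀ u v : List α, ThueEq P u v →
          ∀ s t, (Ap s ∨ ∃ R m, E R m s) → (LPath E u s t ↔ LPath E v s t) := by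
        intro u v huv
        induction huv with
        | rel x y hxy =>
          obtain ⟨a', b', p, hp, rfl, rfl⟩ := hxy
          intro s t hs
          have split : ∀ c : List α, LPath E (a' ++ c ++ b') s t ↔
              ∃ m n, LPath E a' s m ∧ LPath E c m n ∧ LPath E b' n t := by
            intro c
            constructor
            · intro h
              obtain ⟨n, hmn, hn⟩ := (ThueAux.lpath_append E).1 h
              obtain ⟨m, hm, hc⟩ := (ThueAux.lpath_append E).1 hmn
              exact ⟨m, n, hm, hc, hn⟩
            · rintro ⟨m, n, hm, hc, hn⟩
              exact (ThueAux.lpath_append E).2 ⟨n, (ThueAux.lpath_append E).2 ⟨m, hm, hc⟩, hn⟩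
          rw [split p.1, split p.2]
          constructor
          · rintro ⟨m, n, hm, hc, hn⟩
            have hgm : Ap m ∨ ∃ R u, E R u m := ThueAux.good_of_lpath E Ap hm hs
            obtain ⟨n', hn', _⟩ := ThueAux.lpath_exists E Ap h2 h3 p.2 m hgm
            have : n = n' := by
              by_contra hne
              exact hdet m p hp n n' hne hc hn'
            exact ⟨m, n, hm, this ▸ hn', hn⟩
          · rintro ⟨m, n, hm, hc, hn⟩
            have hgm : Ap m ∨ ∃ R u, E R u m := ThueAux.good_of_lpath E Ap hm hs
            obtain ⟨n', hn', _⟩ := ThueAux.lpath_exists E Ap h2 h3 p.1 m hgm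
            have : n' = n := by
              by_contra hne
              exact hdet m p hp n' n hne hn' hc
            exact ⟨m, n, hm, this ▸ hn', hn⟩
        | refl x => intro s t _; rfl
        | symm x y _ ih => intro s t hs; exact (ih s t hs).symm
        | trans x y z _ _ ih1 ih2 => intro s t hs; exact (ih1 s t hs).trans (ih2 s t hs)
      obtain ⟨t, hlt, _⟩ := ThueAux.lpath_exists E Ap h2 h3 l a (Or.inl ha)
      exact ⟨a, t, ha, hlt, (key l r hT a t (Or.inl ha)).1 hlt⟩
end
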